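/- Assume γ ≥ α ≥ β. Then the maximum of T₂ over the interval [0, α/2] equals α/2 + max{γ, α/2 + β} (attained at x = 0 when γ ≥ α/2 + β and at x = α/2 when γ ≤ α/2 + β), and the minimum of T₂ over [0, α/2] equals max{ (α + β + γ)/2, ((α + γ)² − β² + 4·√3·τ)/(4·γ) }. -/

import Mathlib

open Set

noncomputable section

/-- `AR₂(x) = √(β² + (2x − γ)² − 2β(2x − γ)·cos C)`, where
`cos C = (α² + β² − γ²)/(2αβ)` by the Cosine Law. -/
def AR2 (α β γ : ℝ) (x : ℝ) : ℝ :=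
  Real.sqrt (β ^ 2 + (2 * x - γ) ^ 2
    - 2 * β * (2 * x - γ) * ((α ^ 2 + β ^ 2 - γ ^ 2) / (2 * α * β)))

/-- `CR₁(x) = √(β² + (γ − 2x)² − 2β(γ − 2x)·cos A)`, where
`cos A = (β² + γ² − α²)/(2βγ)` by the Cosine Law. -/
def CR1 (α β γ : ℝ) (x : ℝ) : ℝ :=
  Real.sqrt (β ^ 2 + (γ - 2 * x) ^ 2
    - 2 * β * (γ - 2 * x) * ((β ^ 2 + γ ^ 2 - α ^ 2) / (2 * β * γ)))

/-- Worst-case evacuation cost of OppositeSearch in Configuration 1. -/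
def T1 (α β γ : ℝ) (x : ℝ) : ℝ :=
  α / 2 + γ - x + max (AR2 α β γ x) (max β (2 * x - γ))

/-- Worst-case evacuation cost of OppositeSearch in Configuration 2. -/
def T2 (α β γ : ℝ) (x : ℝ) : ℝ :=
  α / 2 + x + max (CR1 α β γ x) (max β (γ - 2 * x))

private lemma sqrt_le_of' {a b : ℝ} (hb : 0 ≤ b) (h : a ≤ b^2) : Real.sqrt a ≤ b := by
  calc Real.sqrt a ≤ Real.sqrt (b^2) := Real.sqrt_le_sqrt h
  _ = b := Real.sqrt_sq hb

private lemma le_sqrt_of' {a b : ℝ} (hb : 0 ≤ b) (h : b^2 ≤ a) : b ≤ Real.sqrt a := by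
  calc b = Real.sqrt (b^2) := (Real.sqrt_sq hb).symm
  _ ≤ Real.sqrt a := Real.sqrt_le_sqrt h

private lemma sq_le_lin {a b : ℝ} (ha : 0 ≤ a) (hb : 0 ≤ b) (h : a^2 ≤ b^2) : a ≤ b := by
  nlinarith

private lemma aux_half (α β γ τ : ℝ) (hα : 0 < α) (hγ : 0 < γ) (hγα : α ≤ γ)
    (hτ2 : 16*τ^2 = 4*β^2*γ^2 - (β^2+γ^2-α^2)^2) :
    (2*γ*(γ-2*(α/2)) - (β^2+γ^2-α^2))^2 + 16*τ^2 ≤ (2*γ*β)^2 := by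
  nlinarith [mul_nonneg (mul_nonneg (by linarith : (0:ℝ) ≤ 2*γ) (by linarith : (0:ℝ) ≤ γ - α))
    (by nlinarith : (0:ℝ) ≤ 2*(β^2 - α^2 + α*γ))]

private lemma aux_ub (α β γ τ M x : ℝ) (hα : 0 < α) (hβ : 0 < β) (hγ : 0 < γ)
    (hγα : α ≤ γ) (hx0 : 0 ≤ x) (hx1 : x ≤ α/2) (hMγ : γ ≤ M) (hMβ : α/2 + β ≤ M)
    (hτ2 : 16*τ^2 = 4*β^2*γ^2 - (β^2+γ^2-α^2)^2) :
    (2*γ*(γ-2*x) - (β^2+γ^2-α^2))^2 + 16*τ^2 ≤ (2*γ*(M-x))^2 := by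
  have a1 : (0:ℝ) ≤ (α - 2*x) * (γ^2 * ((M - α)*(M + α))) := by
    apply mul_nonneg (by linarith)
    apply mul_nonneg (sq_nonneg γ)
    apply mul_nonneg (by linarith) (by linarith)
  have a2 : (0:ℝ) ≤ x * (γ^2 * ((M - α/2 - β)*(M - α/2 + β))) := by
    apply mul_nonneg hx0
    apply mul_nonneg (sq_nonneg γ)
    apply mul_nonneg (by linarith) (by linarith)
  have a3 : (0:ℝ) ≤ x * ((2*γ*(γ-α)) * (2*(β^2 - α^2 + α*γ))) := by
    apply mul_nonneg hx0
    apply mul_nonneg (by nlinarith) (by nlinarith)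
  have a4 : (0:ℝ) ≤ (γ^2*α) * (x*(α/2 - x)) := by
    apply mul_nonneg (by positivity)
    exact mul_nonneg hx0 (by linarith)
  have hτα : α*(16*τ^2) = α*(4*β^2*γ^2 - (β^2+γ^2-α^2)^2) := by
    linear_combination α * hτ2
  have key : 0 ≤ α * ((2*γ*(M-x))^2
      - ((2*γ*(γ-2*x) - (β^2+γ^2-α^2))^2 + 16*τ^2)) := by
    linarith [a1, a2, a3, a4, hτα]
  nlinarith [key, hα]

private lemma aux_x1 (α β γ τ : ℝ) (hβ : 0 < β) (hγ : 0 < γ)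
    (hKc : β*γ ≤ β^2+γ^2-α^2)
    (hτ2 : 16*τ^2 = 4*β^2*γ^2 - (β^2+γ^2-α^2)^2) :
    (2*γ*(γ-2*((γ-β)/2)) - (β^2+γ^2-α^2))^2 + 16*τ^2 ≤ (2*γ*β)^2 := by
  nlinarith [mul_nonneg (by positivity : (0:ℝ) ≤ 2*γ*β)
    (by linarith : (0:ℝ) ≤ 2*((β^2+γ^2-α^2) - β*γ))]

private lemma aux_c1 (α β γ τ r : ℝ) (hβ : 0 < β) (hγ : 0 < γ)
    (hr0 : 0 ≤ r) (hr3 : r^2 = 3) (hτ0 : 0 ≤ τ)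
    (hK0 : 0 ≤ β^2+γ^2-α^2) (hKc : β*γ ≤ β^2+γ^2-α^2)
    (hτ2 : 16*τ^2 = 4*β^2*γ^2 - (β^2+γ^2-α^2)^2) :
    4*r*τ ≤ (β^2+γ^2-α^2) + 2*β*γ := by
  have hr3τ : r^2 * τ^2 = 3 * τ^2 := by rw [hr3]
  have hsq : (4*r*τ)^2 ≤ ((β^2+γ^2-α^2) + 2*β*γ)^2 := by
    nlinarith [hr3τ, hτ2,
      mul_nonneg (by linarith : (0:ℝ) ≤ (β^2+γ^2-α^2) - β*γ)
        (by nlinarith : (0:ℝ) ≤ (β^2+γ^2-α^2) + β*γ),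
      mul_nonneg (by linarith : (0:ℝ) ≤ (β^2+γ^2-α^2) - β*γ) (mul_pos hβ hγ).le]
  exact sq_le_lin (by positivity) (by nlinarith) hsq

private lemma aux_c2 (α β γ τ r : ℝ) (hβ : 0 < β) (hγ : 0 < γ)
    (hr0 : 0 ≤ r) (hr3 : r^2 = 3) (hτ0 : 0 ≤ τ)
    (hK0 : 0 ≤ β^2+γ^2-α^2) (hKc : β^2+γ^2-α^2 ≤ β*γ)
    (hτ2 : 16*τ^2 = 4*β^2*γ^2 - (β^2+γ^2-α^2)^2) :
    3*(β^2+γ^2-α^2) ≤ 4*r*τ ∧ 3*(β*γ) ≤ 4*r*τ ∧ (β^2+γ^2-α^2) + 2*β*γ ≤ 4*r*τ := by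
  have hr3τ : r^2 * τ^2 = 3 * τ^2 := by rw [hr3]
  have hKsq : (β^2+γ^2-α^2)^2 ≤ β^2*γ^2 := by
    nlinarith [mul_le_mul hKc hKc hK0 (mul_pos hβ hγ).le]
  refine ⟨?_, ?_, ?_⟩
  · apply sq_le_lin (by linarith) (by positivity)
    nlinarith [hr3τ, hτ2, hKsq]
  · apply sq_le_lin (by positivity) (by positivity)
    nlinarith [hr3τ, hτ2, hKsq]
  · apply sq_le_lin (by nlinarith [(mul_pos hβ hγ).le]) (by positivity)
    nlinarith [hr3τ, hτ2, hKsq,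
      mul_nonneg (mul_pos hβ hγ).le (by linarith : (0:ℝ) ≤ β*γ - (β^2+γ^2-α^2))]

private lemma aux_c3 (α β γ τ r : ℝ) (hβ : 0 < β) (hγ : 0 < γ) (hα : 0 < α)
    (hγα : α ≤ γ) (hαβ : β ≤ α)
    (hr0 : 0 ≤ r) (hr3 : r^2 = 3) (hτ0 : 0 ≤ τ)
    (hK0 : 0 ≤ β^2+γ^2-α^2)
    (hτ2 : 16*τ^2 = 4*β^2*γ^2 - (β^2+γ^2-α^2)^2) :
    4*r*τ ≤ 3*(γ^2+α^2-β^2) := by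
  have hr3τ : r^2 * τ^2 = 3 * τ^2 := by rw [hr3]
  have hm0 : (0:ℝ) ≤ γ^2+α^2-β^2 := by nlinarith
  apply sq_le_lin (by positivity) (by linarith)
  nlinarith [hr3τ, hτ2,
    mul_nonneg hm0 (by nlinarith : (0:ℝ) ≤ α^2-β^2),
    mul_nonneg (sq_nonneg γ) (by nlinarith : (0:ℝ) ≤ γ^2-β^2)]

set_option maxHeartbeats 1000000 in
/-- Case `γ ≥ α ≥ β`, Configuration 2: the maximum of `T₂` over `[0, α/2]` is
`α/2 + max {γ, α/2 + β}` (attained at `x = 0` when `γ ≥ α/2 + β` and at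
`x = α/2` when `γ ≤ α/2 + β`), and the minimum of `T₂` over `[0, α/2]` is
`max {(α + β + γ)/2, ((α + γ)² − β² + 4√3·τ)/(4γ)}`, where `τ` is the area of
the triangle. -/
theorem stmt17 (α β γ : ℝ) (hα : 0 < α) (hβ : 0 < β) (hγ : 0 < γ)
    (h1 : α < β + γ) (h2 : β < α + γ) (h3 : γ < α + β)
    (h4 : α ^ 2 ≤ β ^ 2 + γ ^ 2) (h5 : β ^ 2 ≤ α ^ 2 + γ ^ 2)
    (h6 : γ ^ 2 ≤ α ^ 2 + β ^ 2)
    (hγα : α ≤ γ) (hαβ : β ≤ α)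
    (τ : ℝ)
    (hτ : τ = (1/4) * Real.sqrt ((α + β + γ) * (-α + β + γ) * (α - β + γ) * (α + β - γ))) :
    IsGreatest (T2 α β γ '' Icc 0 (α / 2)) (α / 2 + max γ (α / 2 + β)) ∧
      (α / 2 + β ≤ γ → T2 α β γ 0 = α / 2 + max γ (α / 2 + β)) ∧
      (γ ≤ α / 2 + β → T2 α β γ (α / 2) = α / 2 + max γ (α / 2 + β)) ∧
      IsLeast (T2 α β γ '' Icc 0 (α / 2))
        (max ((α + β + γ) / 2) (((α + γ) ^ 2 - β ^ 2 + 4 * Real.sqrt 3 * τ) / (4 * γ))) := by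
  have hβ0 : β ≠ 0 := ne_of_gt hβ
  have hγ0 : γ ≠ 0 := ne_of_gt hγ
  set r := Real.sqrt 3 with hrdef
  have hr3 : r ^ 2 = 3 := Real.sq_sqrt (by norm_num)
  have hr0 : 0 ≤ r := Real.sqrt_nonneg 3
  have hP : (0:ℝ) ≤ (α + β + γ) * (-α + β + γ) * (α - β + γ) * (α + β - γ) := by
    apply mul_nonneg; apply mul_nonneg; apply mul_nonneg <;> linarith
    all_goals linarith
  have hτ0 : 0 ≤ τ := by rw [hτ]; positivity
  have hτ2 : 16 * τ^2 = 4*β^2*γ^2 - (β^2+γ^2-α^2)^2 := by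
    rw [hτ, mul_pow, Real.sq_sqrt hP]; ring
  have hK0 : 0 ≤ β^2+γ^2-α^2 := by linarith
  -- normal form of CR1
  have hA : ∀ x : ℝ, CR1 α β γ x
      = Real.sqrt ((2*γ*(γ-2*x) - (β^2+γ^2-α^2))^2 + 16*τ^2) / (2*γ) := by
    intro x
    rw [CR1]
    have h1' : β ^ 2 + (γ - 2 * x) ^ 2
        - 2 * β * (γ - 2 * x) * ((β ^ 2 + γ ^ 2 - α ^ 2) / (2 * β * γ))
        = ((2*γ*(γ-2*x) - (β^2+γ^2-α^2))^2 + 16*τ^2) / (2*γ)^2 := by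
      field_simp
      linear_combination (-1) * hτ2
    rw [h1', Real.sqrt_div (by positivity), Real.sqrt_sq (by linarith)]
  have hCRnn : ∀ x : ℝ, 0 ≤ CR1 α β γ x := by
    intro x; rw [hA x]; positivity
  have hCRle : ∀ x b : ℝ, 0 ≤ b →
      (2*γ*(γ-2*x) - (β^2+γ^2-α^2))^2 + 16*τ^2 ≤ (2*γ*b)^2 → CR1 α β γ x ≤ b := by
    intro x b hb h
    rw [hA x, div_le_iff₀ (by linarith : (0:ℝ) < 2*γ)]
    exact sqrt_le_of' (by positivity) (by nlinarith [h])
  have hCRge : ∀ x b : ℝ,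
      (b*(2*γ))^2 ≤ (2*γ*(γ-2*x) - (β^2+γ^2-α^2))^2 + 16*τ^2 → b ≤ CR1 α β γ x := by
    intro x b h
    rcases le_or_gt b 0 with hb | hb
    · exact le_trans hb (hCRnn x)
    · rw [hA x, le_div_iff₀ (by linarith : (0:ℝ) < 2*γ)]
      exact le_sqrt_of' (by positivity) h
  have hCReq : ∀ x b : ℝ, 0 ≤ b →
      (2*γ*(γ-2*x) - (β^2+γ^2-α^2))^2 + 16*τ^2 = (2*γ*b)^2 → CR1 α β γ x = b := by
    intro x b hb h
    rw [hA x, h, show (2*γ*b)^2 = ((2*γ)*b)^2 by ring,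
      Real.sqrt_sq (by positivity), mul_comm, mul_div_assoc,
      div_self (by linarith : (2:ℝ)*γ ≠ 0), mul_one]
  -- values at endpoints
  have hT20 : T2 α β γ 0 = α/2 + γ := by
    have h0 : CR1 α β γ 0 = α := hCReq 0 α hα.le (by linear_combination hτ2)
    rw [T2, h0, show γ - 2*(0:ℝ) = γ by ring,
      max_eq_right (le_trans hαβ hγα : β ≤ γ), max_eq_right hγα]
    ring
  have hCRh : CR1 α β γ (α/2) ≤ β :=
    hCRle _ _ hβ.le (aux_half α β γ τ hα hγ hγα hτ2)
  have hT2h : T2 α β γ (α/2) = α + β := by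
    rw [T2, show γ - 2*(α/2) = γ - α by ring,
      max_eq_left (by linarith : γ - α ≤ β), max_eq_right hCRh]
    ring
  set M := max γ (α/2 + β) with hM
  have hMγ : γ ≤ M := le_max_left _ _
  have hMβ : α/2 + β ≤ M := le_max_right _ _
  -- upper bound
  have hub : ∀ x ∈ Icc (0:ℝ) (α/2), T2 α β γ x ≤ α / 2 + M := by
    rintro x ⟨hx0, hx1⟩
    have hCRx : CR1 α β γ x ≤ M - x :=
      hCRle _ _ (by linarith) (aux_ub α β γ τ M x hα hβ hγ hγα hx0 hx1 hMγ hMβ hτ2)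
    have h2' : β ≤ M - x := by linarith
    have h3' : γ - 2*x ≤ M - x := by linarith
    have hmx : max (CR1 α β γ x) (max β (γ - 2*x)) ≤ M - x :=
      max_le hCRx (max_le h2' h3')
    rw [T2]; linarith
  -- lower bounds
  have hL1le : ∀ x : ℝ, (α + β + γ)/2 ≤ T2 α β γ x := by
    intro x
    have hb : β ≤ max (CR1 α β γ x) (max β (γ - 2*x)) :=
      le_trans (le_max_left β (γ - 2*x)) (le_max_right _ _)
    have hg : γ - 2*x ≤ max (CR1 α β γ x) (max β (γ - 2*x)) :=
      le_trans (le_max_right β (γ - 2*x)) (le_max_right _ _)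
    rw [T2]; linarith
  have hL2le : ∀ x : ℝ, ((α + γ)^2 - β^2 + 4*r*τ) / (4*γ) ≤ T2 α β γ x := by
    intro x
    have hCRmax : CR1 α β γ x ≤ max (CR1 α β γ x) (max β (γ - 2*x)) := le_max_left _ _
    have hstep : ((α + γ)^2 - β^2 + 4*r*τ) / (4*γ) ≤ α/2 + x + CR1 α β γ x := by
      rcases le_or_gt ((α^2 + γ^2 - β^2 + 4*r*τ)/2 - 2*γ*x) 0 with hRn | hRp
      · rw [div_le_iff₀ (by linarith : (0:ℝ) < 4*γ)]
        have h5' : 0 ≤ CR1 α β γ x * (4*γ) := mul_nonneg (hCRnn x) (by linarith)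
        nlinarith [h5']
      · have hb := hCRge x (((α^2 + γ^2 - β^2 + 4*r*τ)/2 - 2*γ*x)/(2*γ)) (by
          rw [div_mul_cancel₀ _ (by linarith : (2:ℝ)*γ ≠ 0)]
          have hAR : (2*γ*(γ-2*x) - (β^2+γ^2-α^2))^2 + 16*τ^2
              - ((α^2 + γ^2 - β^2 + 4*r*τ)/2 - 2*γ*x)^2
              = (r*(2*γ*(γ-2*x) - (β^2+γ^2-α^2))/2 - 2*τ)^2 := by
            linear_combination (-((2*γ*(γ-2*x) - (β^2+γ^2-α^2))^2/4 + 4*τ^2)) * hr3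
          nlinarith [hAR, sq_nonneg (r*(2*γ*(γ-2*x) - (β^2+γ^2-α^2))/2 - 2*τ)])
        have heq : ((α + γ)^2 - β^2 + 4*r*τ) / (4*γ)
            = α/2 + x + ((α^2 + γ^2 - β^2 + 4*r*τ)/2 - 2*γ*x)/(2*γ) := by
          field_simp; ring
        rw [heq]
        linarith [hb]
    calc ((α + γ)^2 - β^2 + 4*r*τ) / (4*γ) ≤ α/2 + x + CR1 α β γ x := hstep
    _ ≤ T2 α β γ x := by rw [T2]; linarith
  -- membership for the minimum
  have hmem : ∃ x ∈ Icc (0:ℝ) (α/2), T2 α β γ x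
      = max ((α + β + γ) / 2) (((α + γ) ^ 2 - β ^ 2 + 4 * r * τ) / (4 * γ)) := by
    rcases le_or_gt (β*γ) (β^2+γ^2-α^2) with hKc | hKc
    · -- K ≥ βγ : minimum at x₁ = (γ-β)/2, value L1
      refine ⟨(γ-β)/2, ⟨by linarith [le_trans hαβ hγα], by linarith⟩, ?_⟩
      have hCR1x : CR1 α β γ ((γ-β)/2) ≤ β :=
        hCRle _ _ hβ.le (aux_x1 α β γ τ hβ hγ hKc hτ2)
      have hval : T2 α β γ ((γ-β)/2) = (α+β+γ)/2 := by
        rw [T2, show γ - 2*((γ-β)/2) = β by ring, max_self, max_eq_right hCR1x]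
        ring
      have h4rτ := aux_c1 α β γ τ r hβ hγ hr0 hr3 hτ0 hK0 hKc hτ2
      have hL2L1 : ((α + γ)^2 - β^2 + 4*r*τ) / (4*γ) ≤ (α+β+γ)/2 := by
        rw [div_le_div_iff₀ (by linarith : (0:ℝ) < 4*γ) (by norm_num : (0:ℝ) < 2)]
        nlinarith [h4rτ]
      rw [hval, max_eq_left hL2L1]
    · -- K < βγ : minimum at x*, value L2
      obtain ⟨h3K, hβ3, h4rτ⟩ := aux_c2 α β γ τ r hβ hγ hr0 hr3 hτ0 hK0 hKc.le hτ2
      have hxu := aux_c3 α β γ τ r hβ hγ hα hγα hαβ hr0 hr3 hτ0 hK0 hτ2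
      set xs := (3*(γ^2+α^2-β^2) - 4*r*τ)/(12*γ) with hxs
      have hxs0 : 0 ≤ xs := by
        rw [hxs]; apply div_nonneg (by linarith) (by linarith)
      have hxsu : xs ≤ α/2 := by
        rw [hxs, div_le_iff₀ (by linarith : (0:ℝ) < 12*γ)]
        have hga : (γ-α)^2 ≤ β^2 := by nlinarith
        nlinarith [mul_nonneg (mul_nonneg (by norm_num : (0:ℝ) ≤ 4) hr0) hτ0, hga]
      refine ⟨xs, ⟨hxs0, hxsu⟩, ?_⟩
      have hCRval : CR1 α β γ xs = 4*r*τ/(3*γ) := by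
        apply hCReq _ _ (by positivity)
        have hw : 2*γ*(γ - 2*xs) - (β^2+γ^2-α^2) = 4*r*τ/3 := by
          rw [hxs]; field_simp; ring
        rw [hw]
        field_simp
        linear_combination (-48*τ^2) * hr3
      have hgl : γ - 2*xs = (3*(β^2+γ^2-α^2) + 4*r*τ)/(6*γ) := by
        rw [hxs]; field_simp; ring
      have hg2 : γ - 2*xs ≤ 4*r*τ/(3*γ) := by
        rw [hgl, div_le_div_iff₀ (by linarith : (0:ℝ) < 6*γ) (by linarith : (0:ℝ) < 3*γ)]
        nlinarith [mul_nonneg hγ.le (show (0:ℝ) ≤ 4*r*τ - 3*(β^2+γ^2-α^2) by linarith)]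
      have hb2 : β ≤ 4*r*τ/(3*γ) := by
        rw [le_div_iff₀ (by linarith : (0:ℝ) < 3*γ)]
        nlinarith [hβ3]
      have hval : T2 α β γ xs = ((α + γ)^2 - β^2 + 4*r*τ) / (4*γ) := by
        rw [T2, hCRval, max_eq_left (max_le hb2 hg2), hxs]
        field_simp; ring
      have hL1L2 : (α+β+γ)/2 ≤ ((α + γ)^2 - β^2 + 4*r*τ) / (4*γ) := by
        rw [div_le_div_iff₀ (by norm_num : (0:ℝ) < 2) (by linarith : (0:ℝ) < 4*γ)]
        nlinarith [h4rτ]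
      rw [hval, max_eq_right hL1L2]
  refine ⟨⟨?_, ?_⟩, ?_, ?_, ?_, ?_⟩
  · rcases le_total (α/2 + β) γ with h | h
    · exact ⟨0, ⟨le_refl 0, by linarith⟩, by rw [hT20, hM, max_eq_left h]⟩
    · exact ⟨α/2, ⟨by linarith, le_refl _⟩, by rw [hT2h, hM, max_eq_right h]; ring⟩
  · rintro y ⟨x, hx, rfl⟩
    exact hub x hx
  · intro h; rw [hT20, hM, max_eq_left h]
  · intro h; rw [hT2h, hM, max_eq_right h]; ring
  · obtain ⟨x, hx, hval⟩ := hmem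
    exact ⟨x, hx, hval⟩
  · rintro y ⟨x, hx, rfl⟩
    exact max_le (hL1le x) (hL2le x)
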